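/- arXiv:2503.13398 — 4 statements merged into one kernel-verified Lean document; each statement's English description precedes it below -/
import Mathlib

section
/- In the graph G constructed from a (3,2)-set-cover instance (U,𝒮,τ) as in the reduction, if 𝒮 has a cover of U of size at most τ, then G contains a collection of at least 2n + m − τ pairwise edge-disjoint directed 3-paths. -/
/-- Vertices of the graph built from a (3,2)-set-cover instance:
`Sum.inl (j, a)` is the vertex u_{j,x_a} (for x_a ∈ S_j), `Sum.inr (Sum.inl j)`
is the sink u_j of the gadget of S_j, and `Sum.inr (Sum.inr (i, t))` is the
vertex v_{i,t+1} (t : Fin 4) of the gadget of the element x_i. -/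
abbrev SCVtx (n m : ℕ) := (Fin m × Fin n) ⊕ Fin m ⊕ (Fin n × Fin 4)

/-- Directed edges of the reduction graph: for each S_j = {x_p, x_q, x_r}
(p < q < r) the path u_{j,x_p} → u_{j,x_q} → u_{j,x_r} → u_j (consecutive
elements of S_j in increasing order, the maximum going to u_j); for each
element x_i the edges v_{i,1} → v_{i,3}, v_{i,3} → v_{i,4}, v_{i,2} → v_{i,4};
and the edges v_{i,4} → u_{j,x_i} for each set S_j containing x_i. -/
def SCEdge {n m : ℕ} (S : Fin m → Finset (Fin n)) :
    SCVtx n m → SCVtx n m → Prop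
  | Sum.inl (j, a), Sum.inl (j', b) =>
      j = j' ∧ a ∈ S j ∧ b ∈ S j ∧ a < b ∧ ∀ c ∈ S j, ¬(a < c ∧ c < b)
  | Sum.inl (j, a), Sum.inr (Sum.inl j') =>
      j = j' ∧ a ∈ S j ∧ ∀ c ∈ S j, c ≤ a
  | Sum.inr (Sum.inr (i, t)), Sum.inr (Sum.inr (i', t')) =>
      i = i' ∧ ((t = 0 ∧ t' = 2) ∨ (t = 2 ∧ t' = 3) ∨ (t = 1 ∧ t' = 3))
  | Sum.inr (Sum.inr (i, t)), Sum.inl (j, a) => a = i ∧ t = 3 ∧ i ∈ S j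
  | _, _ => False

/-- A directed path in the reduction graph, as its list of edges. -/
def SCPath {n m : ℕ} (S : Fin m → Finset (Fin n))
    (p : List (SCVtx n m × SCVtx n m)) : Prop :=
  (∀ e ∈ p, SCEdge S e.1 e.2) ∧ p.Chain' (fun e f => e.2 = f.1)

/-- A collection of pairwise edge-disjoint paths. -/
def SCEdgeDisjoint {n m : ℕ} (P : Finset (List (SCVtx n m × SCVtx n m))) : Prop :=
  ∀ p ∈ P, ∀ q ∈ P, p ≠ q → ∀ e ∈ p, e ∉ q

section Aux

variable {n m : ℕ}

/-- vertex u_{j,a} -/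
def uV (j : Fin m) (a : Fin n) : SCVtx n m := Sum.inl (j, a)
/-- sink u_j -/
def wV (j : Fin m) : SCVtx n m := Sum.inr (Sum.inl j)
/-- vertex v_{i,t+1} -/
def vV (i : Fin n) (t : Fin 4) : SCVtx n m := Sum.inr (Sum.inr (i, t))

/-- successor of u_{j,a} inside the gadget of S_j, given the sorted triple. -/
def nxtV (E0 E1 E2 : Fin m → Fin n) (j : Fin m) (a : Fin n) : SCVtx n m :=
  if a = E0 j then uV j (E1 j) else if a = E1 j then uV j (E2 j) else wV j

def pathA (o : Fin n → Fin m) (i : Fin n) : List (SCVtx n m × SCVtx n m) :=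
  [(vV i 0, vV i 2), (vV i 2, vV i 3), (vV i 3, uV (o i) i)]

def pathB (c : Fin n → Fin m) (E0 E1 E2 : Fin m → Fin n) (i : Fin n) :
    List (SCVtx n m × SCVtx n m) :=
  [(vV i 1, vV i 3), (vV i 3, uV (c i) i), (uV (c i) i, nxtV E0 E1 E2 (c i) i)]

def pathG (E0 E1 E2 : Fin m → Fin n) (j : Fin m) : List (SCVtx n m × SCVtx n m) :=
  [(uV j (E0 j), uV j (E1 j)), (uV j (E1 j), uV j (E2 j)), (uV j (E2 j), wV j)]

end Aux

/-- if the (3,2)-set-cover instance (U, 𝒮, τ) has a cover of size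
at most τ, then the reduction graph contains at least 2n + m − τ pairwise
edge-disjoint directed 3-paths. -/
theorem stmt_11 {n m : ℕ} (S : Fin m → Finset (Fin n)) (τ : ℕ) (hτ : τ ≤ m)
    (hcard : ∀ j, (S j).card = 3)
    (helem : ∀ i : Fin n, (Finset.univ.filter (fun j => i ∈ S j)).card = 2)
    (hcover : ∃ T : Finset (Fin m), T.card ≤ τ ∧ ∀ i : Fin n, ∃ j ∈ T, i ∈ S j) :
    ∃ P : Finset (List (SCVtx n m × SCVtx n m)),
      (∀ p ∈ P, SCPath S p ∧ p.length = 3) ∧ SCEdgeDisjoint P ∧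
      2 * n + m - τ ≤ P.card := by
  classical
  obtain ⟨T, hT, hcov⟩ := hcover
  choose c hcT hci using hcov
  -- the other set containing i
  obtain ⟨o, hoi, hco⟩ : ∃ o : Fin n → Fin m, (∀ i, i ∈ S (o i)) ∧ ∀ i, c i ≠ o i := by
    have hmemc : ∀ i, c i ∈ Finset.univ.filter (fun j => i ∈ S j) := by
      intro i; simp [hci i]
    have hne : ∀ i, ((Finset.univ.filter (fun j => i ∈ S j)).erase (c i)).Nonempty := by
      intro i
      rw [← Finset.card_pos, Finset.card_erase_of_mem (hmemc i), helem i]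
      norm_num
    refine ⟨fun i => ((Finset.univ.filter (fun j => i ∈ S j)).erase (c i)).min' (hne i),
      fun i => ?_, fun i => ?_⟩
    · have h := Finset.min'_mem _ (hne i)
      have := Finset.mem_of_mem_erase h
      simpa using this
    · have h := Finset.min'_mem _ (hne i)
      exact fun hc => (Finset.mem_erase.mp h).1 hc.symm
  -- the sorted triple of each set
  have hSne : ∀ j, (S j).Nonempty := by
    intro j; rw [← Finset.card_pos, hcard]; norm_num
  have hEne : ∀ j, ((S j).erase ((S j).min' (hSne j))).Nonempty := by
    intro j
    rw [← Finset.card_pos, Finset.card_erase_of_mem (Finset.min'_mem _ _), hcard]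
    norm_num
  obtain ⟨E0, E1, E2, he0, he1, he2, h01, h12, hall⟩ :
      ∃ E0 E1 E2 : Fin m → Fin n, (∀ j, E0 j ∈ S j) ∧ (∀ j, E1 j ∈ S j) ∧
        (∀ j, E2 j ∈ S j) ∧ (∀ j, E0 j < E1 j) ∧ (∀ j, E1 j < E2 j) ∧
        ∀ j, ∀ a ∈ S j, a = E0 j ∨ a = E1 j ∨ a = E2 j := by
    refine ⟨fun j => (S j).min' (hSne j),
      fun j => ((S j).erase ((S j).min' (hSne j))).min' (hEne j),
      fun j => (S j).max' (hSne j), fun j => Finset.min'_mem _ _,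
      fun j => Finset.mem_of_mem_erase (Finset.min'_mem _ _),
      fun j => Finset.max'_mem _ _, fun j => ?_, fun j => ?_, fun j a ha => ?_⟩
    · have h := Finset.min'_mem _ (hEne j)
      exact lt_of_le_of_ne (Finset.min'_le _ _ (Finset.mem_of_mem_erase h))
        (Ne.symm (Finset.mem_erase.mp h).1)
    · have hmax : (S j).max' (hSne j) ∈ (S j).erase ((S j).min' (hSne j)) := by
        refine Finset.mem_erase.mpr ⟨?_, Finset.max'_mem _ _⟩
        have := Finset.min'_lt_max'_of_card (S j) (by rw [hcard]; norm_num)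
        exact this.ne'
      refine lt_of_le_of_ne (Finset.min'_le _ _ hmax) ?_
      intro heq
      simp only [] at heq
      obtain ⟨x, hx, y, hy, hxy⟩ := Finset.one_lt_card.mp
        (show 1 < ((S j).erase ((S j).min' (hSne j))).card by
          rw [Finset.card_erase_of_mem (Finset.min'_mem _ _), hcard]; norm_num)
      have hx1 := Finset.min'_le _ _ hx
      have hx2 := Finset.le_max' (S j) x (Finset.mem_of_mem_erase hx)
      have hy1 := Finset.min'_le _ _ hy
      have hy2 := Finset.le_max' (S j) y (Finset.mem_of_mem_erase hy)
      rw [heq] at hx1 hy1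
      exact hxy (le_antisymm hx2 hx1 |>.trans (le_antisymm hy2 hy1).symm)
    · set a0 := (S j).min' (hSne j) with ha0
      set a1 := ((S j).erase ((S j).min' (hSne j))).min' (hEne j) with ha1
      set a2 := (S j).max' (hSne j) with ha2
      by_contra hcon
      push_neg at hcon
      obtain ⟨hna0, hna1, hna2⟩ := hcon
      have ha : a ∈ (S j).erase a0 := Finset.mem_erase.mpr ⟨hna0, ha⟩
      have h1 : a1 ≤ a := Finset.min'_le _ _ ha
      have h2 : a ≤ a2 := Finset.le_max' _ _ (Finset.mem_of_mem_erase ha)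
      -- a is strictly between a1 and a2 but erase has card 2
      have hsub : ({a1, a, a2} : Finset (Fin n)) ⊆ (S j).erase a0 := by
        intro x hx
        simp only [Finset.mem_insert, Finset.mem_singleton] at hx
        rcases hx with rfl | rfl | rfl
        · exact Finset.min'_mem _ _
        · exact ha
        · refine Finset.mem_erase.mpr ⟨?_, Finset.max'_mem _ _⟩
          have := Finset.min'_lt_max'_of_card (S j) (by rw [hcard]; norm_num)
          exact this.ne'
      have hc3 : ({a1, a, a2} : Finset (Fin n)).card = 3 := by
        rw [Finset.card_insert_of_notMem (by simp [Ne.symm hna1, (lt_of_le_of_ne h1 (Ne.symm hna1)).trans_le h2 |>.ne]; exact Ne.symm hna1),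
          Finset.card_insert_of_notMem (by simp [hna2]; exact hna2), Finset.card_singleton]
      have := Finset.card_le_card hsub
      rw [hc3, Finset.card_erase_of_mem (Finset.min'_mem _ _), hcard] at this
      omega
  -- the gadget edges
  have hedge : ∀ j, ∀ a ∈ S j, SCEdge S (uV j a) (nxtV E0 E1 E2 j a) := by
    intro j a ha
    unfold nxtV
    by_cases hh0 : a = E0 j
    · rw [if_pos hh0]; subst hh0
      refine ⟨rfl, he0 j, he1 j, h01 j, ?_⟩
      rintro x hx ⟨hx1, hx2⟩
      rcases hall j x hx with rfl | rfl | rfl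
      · exact lt_irrefl _ hx1
      · exact lt_irrefl _ hx2
      · exact lt_asymm hx2 (h12 j)
    · rw [if_neg hh0]
      by_cases hh1 : a = E1 j
      · rw [if_pos hh1]; subst hh1
        refine ⟨rfl, he1 j, he2 j, h12 j, ?_⟩
        rintro x hx ⟨hx1, hx2⟩
        rcases hall j x hx with rfl | rfl | rfl
        · exact lt_asymm hx1 (h01 j)
        · exact lt_irrefl _ hx1
        · exact lt_irrefl _ hx2
      · rw [if_neg hh1]
        have ha2 : a = E2 j := by
          rcases hall j a ha with h | h | h
          · exact absurd h hh0
          · exact absurd h hh1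
          · exact h
        subst ha2
        refine ⟨rfl, he2 j, ?_⟩
        intro x hx
        rcases hall j x hx with rfl | rfl | rfl
        · exact ((h01 j).trans (h12 j)).le
        · exact (h12 j).le
        · exact le_refl _
  -- path validity
  have hA : ∀ i, SCPath S (pathA o i) ∧ (pathA o i).length = 3 := by
    intro i
    refine ⟨⟨?_, ?_⟩, rfl⟩
    · intro e he
      simp only [pathA, List.mem_cons, List.not_mem_nil, or_false] at he
      rcases he with rfl | rfl | rfl
      · exact ⟨rfl, Or.inl ⟨rfl, rfl⟩⟩
      · exact ⟨rfl, Or.inr (Or.inl ⟨rfl, rfl⟩)⟩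
      · exact ⟨rfl, rfl, hoi i⟩
    · simp [pathA, List.Chain', List.isChain_cons_cons, vV]
  have hB : ∀ i, SCPath S (pathB c E0 E1 E2 i) ∧ (pathB c E0 E1 E2 i).length = 3 := by
    intro i
    refine ⟨⟨?_, ?_⟩, rfl⟩
    · intro e he
      simp only [pathB, List.mem_cons, List.not_mem_nil, or_false] at he
      rcases he with rfl | rfl | rfl
      · exact ⟨rfl, Or.inr (Or.inr ⟨rfl, rfl⟩)⟩
      · exact ⟨rfl, rfl, hci i⟩
      · exact hedge (c i) i (hci i)
    · simp [pathB, List.Chain', List.isChain_cons_cons, vV, uV]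
  have hG : ∀ j, SCPath S (pathG E0 E1 E2 j) ∧ (pathG E0 E1 E2 j).length = 3 := by
    intro j
    refine ⟨⟨?_, ?_⟩, rfl⟩
    · intro e he
      simp only [pathG, List.mem_cons, List.not_mem_nil, or_false] at he
      rcases he with rfl | rfl | rfl
      · have h := hedge j (E0 j) (he0 j)
        rwa [nxtV, if_pos rfl] at h
      · have h := hedge j (E1 j) (he1 j)
        rwa [nxtV, if_neg (h01 j).ne', if_pos rfl] at h
      · have h := hedge j (E2 j) (he2 j)
        rwa [nxtV, if_neg ((h01 j).trans (h12 j)).ne', if_neg (h12 j).ne'] at h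
    · simp [pathG, List.Chain', List.isChain_cons_cons, uV]
  -- pairwise edge disjointness of the families
  have hAA : ∀ i i' : Fin n, i ≠ i' → ∀ e, e ∈ pathA o i → e ∈ pathA o i' → False := by
    intro i i' hne e h1 h2
    simp only [pathA, List.mem_cons, List.not_mem_nil, or_false] at h1 h2
    rcases h1 with rfl | rfl | rfl <;> rcases h2 with h | h | h <;>
simp only [vV, uV, wV, Prod.mk.injEq, Sum.inl.injEq, Sum.inr.injEq, Fin.reduceEq, reduceCtorEq, and_false, false_and, and_true, true_and] at h <;> tauto
  have hBB : ∀ i i' : Fin n, i ≠ i' →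
      ∀ e, e ∈ pathB c E0 E1 E2 i → e ∈ pathB c E0 E1 E2 i' → False := by
    intro i i' hne e h1 h2
    simp only [pathB, List.mem_cons, List.not_mem_nil, or_false] at h1 h2
    rcases h1 with rfl | rfl | rfl <;> rcases h2 with h | h | h <;>
simp only [vV, uV, wV, Prod.mk.injEq, Sum.inl.injEq, Sum.inr.injEq, Fin.reduceEq, reduceCtorEq, and_false, false_and, and_true, true_and] at h <;> tauto
  have hGG : ∀ j j' : Fin m, j ≠ j' →
      ∀ e, e ∈ pathG E0 E1 E2 j → e ∈ pathG E0 E1 E2 j' → False := by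
    intro j j' hne e h1 h2
    simp only [pathG, List.mem_cons, List.not_mem_nil, or_false] at h1 h2
    rcases h1 with rfl | rfl | rfl <;> rcases h2 with h | h | h <;>
simp only [vV, uV, wV, Prod.mk.injEq, Sum.inl.injEq, Sum.inr.injEq, Fin.reduceEq, reduceCtorEq, and_false, false_and, and_true, true_and] at h <;> tauto
  have hoc : ∀ i, o i ≠ c i := fun i => (hco i).symm
  have hAB : ∀ i i' : Fin n, ∀ e, e ∈ pathA o i → e ∈ pathB c E0 E1 E2 i' → False := by
    intro i i' e h1 h2
    simp only [pathA, pathB, List.mem_cons, List.not_mem_nil, or_false] at h1 h2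
    rcases h1 with rfl | rfl | rfl <;> rcases h2 with h | h | h <;>
simp only [vV, uV, wV, Prod.mk.injEq, Sum.inl.injEq, Sum.inr.injEq, Fin.reduceEq, reduceCtorEq, and_false, false_and, and_true, true_and] at h <;>
      first
      | tauto
      | (obtain ⟨rfl, h2, -⟩ := h; exact hoc _ h2)
  have hAG : ∀ (i : Fin n) (j : Fin m), ∀ e, e ∈ pathA o i → e ∈ pathG E0 E1 E2 j → False := by
    intro i j e h1 h2
    simp only [pathA, pathG, List.mem_cons, List.not_mem_nil, or_false] at h1 h2
    rcases h1 with rfl | rfl | rfl <;> rcases h2 with h | h | h <;>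
simp only [vV, uV, wV, Prod.mk.injEq, Sum.inl.injEq, Sum.inr.injEq, Fin.reduceEq, reduceCtorEq, and_false, false_and, and_true, true_and] at h <;> tauto
  have hBG : ∀ (i : Fin n) (j : Fin m), c i ≠ j →
      ∀ e, e ∈ pathB c E0 E1 E2 i → e ∈ pathG E0 E1 E2 j → False := by
    intro i j hne e h1 h2
    simp only [pathB, pathG, List.mem_cons, List.not_mem_nil, or_false] at h1 h2
    rcases h1 with rfl | rfl | rfl <;> rcases h2 with h | h | h <;>
simp only [vV, uV, wV, Prod.mk.injEq, Sum.inl.injEq, Sum.inr.injEq, Fin.reduceEq, reduceCtorEq, and_false, false_and, and_true, true_and] at h <;> tauto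
  -- the collection
  set Free : Finset (Fin m) := Finset.univ.filter (fun j => ∀ i, c i ≠ j) with hFree
  refine ⟨(Finset.univ.image (pathA o)) ∪ (Finset.univ.image (pathB c E0 E1 E2)) ∪
    (Free.image (pathG E0 E1 E2)), ?_, ?_, ?_⟩
  · intro p hp
    simp only [Finset.mem_union, Finset.mem_image, Finset.mem_univ, true_and,
      Finset.mem_filter] at hp
    rcases hp with (⟨i, rfl⟩ | ⟨i, rfl⟩) | ⟨j, _, rfl⟩
    · exact hA i
    · exact hB i
    · exact hG j
  · intro p hp q hq hpq e hep heq
    simp only [Finset.mem_union, Finset.mem_image, Finset.mem_univ, true_and,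
      Finset.mem_filter, hFree] at hp hq
    rcases hp with (⟨i, rfl⟩ | ⟨i, rfl⟩) | ⟨j, hj, rfl⟩ <;>
      rcases hq with (⟨i', rfl⟩ | ⟨i', rfl⟩) | ⟨j', hj', rfl⟩
    · exact hAA i i' (fun h => hpq (by rw [h])) e hep heq
    · exact hAB i i' e hep heq
    · exact hAG i j' e hep heq
    · exact hAB i' i e heq hep
    · exact hBB i i' (fun h => hpq (by rw [h])) e hep heq
    · exact hBG i j' (fun h => hj' i h) e hep heq
    · exact hAG i' j e heq hep
    · exact hBG i' j (fun h => hj i' h) e heq hep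
    · exact hGG j j' (fun h => hpq (by rw [h])) e hep heq
  · -- cardinality
    have dAB : Disjoint (Finset.univ.image (pathA o))
        (Finset.univ.image (pathB c E0 E1 E2)) := by
      rw [Finset.disjoint_left]
      rintro p hp hq
      simp only [Finset.mem_image, Finset.mem_univ, true_and] at hp hq
      obtain ⟨i, rfl⟩ := hp
      obtain ⟨i', hi'⟩ := hq
      exact hAB i i' (vV i 0, vV i 2) (by simp [pathA]) (hi' ▸ by simp [pathA])
    have dABG : Disjoint ((Finset.univ.image (pathA o)) ∪
        (Finset.univ.image (pathB c E0 E1 E2))) (Free.image (pathG E0 E1 E2)) := by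
      rw [Finset.disjoint_left]
      rintro p hp hq
      simp only [Finset.mem_union, Finset.mem_image, Finset.mem_univ, true_and] at hp hq
      obtain ⟨j, hjf, hj⟩ := hq
      rcases hp with ⟨i, rfl⟩ | ⟨i, rfl⟩
      · exact hAG i j (vV i 0, vV i 2) (by simp [pathA]) (hj ▸ by simp [pathA])
      · refine hBG i j ?_ (vV i 1, vV i 3) (by simp [pathB]) (hj ▸ by simp [pathB])
        rw [hFree] at hjf
        simp only [Finset.mem_filter] at hjf
        exact hjf.2 i
    have cA : (Finset.univ.image (pathA o)).card = n := by
      rw [Finset.card_image_of_injective _ ?_, Finset.card_univ, Fintype.card_fin]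
      intro i i' h
      by_contra hne
      exact hAA i i' hne (vV i 0, vV i 2) (by simp [pathA]) (h ▸ by simp [pathA])
    have cB : (Finset.univ.image (pathB c E0 E1 E2)).card = n := by
      rw [Finset.card_image_of_injective _ ?_, Finset.card_univ, Fintype.card_fin]
      intro i i' h
      by_contra hne
      exact hBB i i' hne (vV i 1, vV i 3) (by simp [pathB]) (h ▸ by simp [pathB])
    have cG : (Free.image (pathG E0 E1 E2)).card = Free.card := by
      rw [Finset.card_image_of_injective _ ?_]
      intro j j' h
      by_contra hne
      exact hGG j j' hne (uV j (E0 j), uV j (E1 j)) (by simp [pathG]) (h ▸ by simp [pathG])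
    have hFreeCard : m - τ ≤ Free.card := by
      have hsplit := Finset.card_filter_add_card_filter_not
        (s := (Finset.univ : Finset (Fin m))) (p := fun j => ∀ i : Fin n, c i ≠ j)
      have hsubT : (Finset.univ.filter (fun j => ¬ ∀ i : Fin n, c i ≠ j)) ⊆ T := by
        intro j hj
        simp only [Finset.mem_filter, Finset.mem_univ, true_and, not_forall, not_not] at hj
        obtain ⟨i, rfl⟩ := hj
        exact hcT i
      have hle := Finset.card_le_card hsubT
      rw [← hFree] at hsplit
      rw [Finset.card_univ, Fintype.card_fin] at hsplit
      omega
    rw [Finset.card_union_of_disjoint dABG, Finset.card_union_of_disjoint dAB, cA, cB, cG]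
    omega
end

section
/- In the graph G constructed from a (3,2)-set-cover instance (U,𝒮,τ), if G contains at least 2n + m − τ pairwise edge-disjoint directed 3-paths, then 𝒮 contains a subfamily of size at most τ covering U. -/
def scIsCross {n m : ℕ} : (SCVtx n m × SCVtx n m) → Bool
  | (Sum.inr (Sum.inr _), Sum.inl _) => true
  | _ => false

lemma sc_out_unique {n m : ℕ} {S : Fin m → Finset (Fin n)} {j : Fin m} {a : Fin n}
    {y y' : SCVtx n m} (h : SCEdge S (Sum.inl (j,a)) y) (h' : SCEdge S (Sum.inl (j,a)) y') :
    y = y' := by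
  rcases y with ⟨j2,b⟩ | j2 | ⟨i2,t2⟩ <;> rcases y' with ⟨j3,b'⟩ | j3 | ⟨i3,t3⟩ <;>
    simp only [SCEdge] at h h'
  · obtain ⟨rfl, ha, hb, hab, hbet⟩ := h
    obtain ⟨hj3, -, hb', hab', hbet'⟩ := h'
    subst hj3
    rcases lt_trichotomy b b' with hlt | rfl | hlt
    · exact absurd ⟨hab, hlt⟩ (hbet' b hb)
    · rfl
    · exact absurd ⟨hab', hlt⟩ (hbet b' hb')
  · obtain ⟨rfl, ha, hb, hab, hbet⟩ := h
    exact absurd hab (h'.2.2 b hb).not_gt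
  · obtain ⟨rfl, ha', hb', hab', hbet'⟩ := h'
    exact absurd hab' (h.2.2 b' hb').not_gt
  · rw [show j2 = j from h.1.symm, show j3 = j from h'.1.symm]

lemma sc_nocross_struct {n m : ℕ} {S : Fin m → Finset (Fin n)} (hcard : ∀ j, (S j).card = 3)
    {x1 x2 x3 x4 : SCVtx n m} (h1 : SCEdge S x1 x2) (h2 : SCEdge S x2 x3) (h3 : SCEdge S x3 x4)
    (hc1 : scIsCross (x1,x2) = false) (hc2 : scIsCross (x2,x3) = false)
    (hc3 : scIsCross (x3,x4) = false) :
    ∃ j a b c, x1 = Sum.inl (j,a) ∧ x2 = Sum.inl (j,b) ∧ x3 = Sum.inl (j,c) ∧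
      x4 = Sum.inr (Sum.inl j) ∧ a ∈ S j ∧ b ∈ S j ∧ c ∈ S j ∧ a < b ∧ b < c ∧
      (∀ x ∈ S j, x = a ∨ x = b ∨ x = c) := by
  rcases x1 with ⟨j1,a⟩ | j1 | ⟨i1,t1⟩ <;> rcases x2 with ⟨j2,b⟩ | j2 | ⟨i2,t2⟩ <;>
    rcases x3 with ⟨j3,c⟩ | j3 | ⟨i3,t3⟩ <;> rcases x4 with ⟨j4,d⟩ | j4 | ⟨i4,t4⟩ <;>
    simp only [SCEdge, scIsCross] at h1 h2 h3 hc1 hc2 hc3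
  · -- four inl vertices: contradiction with card 3
    exfalso
    obtain ⟨rfl, ha, hb, hab, -⟩ := h1
    obtain ⟨rfl, -, hcc, hbc, -⟩ := h2
    obtain ⟨rfl, -, hd, hcd, -⟩ := h3
    have hab' : a ≠ b := ne_of_lt hab
    have hac : a ≠ c := ne_of_lt (hab.trans hbc)
    have had : a ≠ d := ne_of_lt ((hab.trans hbc).trans hcd)
    have hbc' : b ≠ c := ne_of_lt hbc
    have hbd : b ≠ d := ne_of_lt (hbc.trans hcd)
    have hcd' : c ≠ d := ne_of_lt hcd
    have hsub : ({a, b, c, d} : Finset (Fin n)) ⊆ S j1 := by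
      intro x hx
      simp only [Finset.mem_insert, Finset.mem_singleton] at hx
      rcases hx with rfl | rfl | rfl | rfl <;> assumption
    have h4 : ({a, b, c, d} : Finset (Fin n)).card = 4 := by
      rw [Finset.card_insert_of_notMem (by simp [hab', hac, had]),
        Finset.card_insert_of_notMem (by simp [hbc', hbd]),
        Finset.card_insert_of_notMem (by simp [hcd']), Finset.card_singleton]
    have := Finset.card_le_card hsub
    rw [h4, hcard j1] at this
    omega
  · -- the full gadget path
    obtain ⟨rfl, ha, hb, hab, -⟩ := h1
    obtain ⟨rfl, -, hcc, hbc, -⟩ := h2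
    obtain ⟨rfl, -, hmax⟩ := h3
    refine ⟨j1, a, b, c, rfl, rfl, rfl, rfl, ha, hb, hcc, hab, hbc, ?_⟩
    have hab' : a ≠ b := ne_of_lt hab
    have hac : a ≠ c := ne_of_lt (hab.trans hbc)
    have hbc' : b ≠ c := ne_of_lt hbc
    have hsub : ({a, b, c} : Finset (Fin n)) ⊆ S j1 := by
      intro x hx
      simp only [Finset.mem_insert, Finset.mem_singleton] at hx
      rcases hx with rfl | rfl | rfl <;> assumption
    have h3' : ({a, b, c} : Finset (Fin n)).card = 3 := by
      rw [Finset.card_insert_of_notMem (by simp [hab', hac]),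
        Finset.card_insert_of_notMem (by simp [hbc']), Finset.card_singleton]
    have heq : ({a, b, c} : Finset (Fin n)) = S j1 :=
      Finset.eq_of_subset_of_card_le hsub (by rw [h3', hcard j1])
    intro x hx
    rw [← heq] at hx
    simpa using hx
  · exact Bool.noConfusion hc1
  · exact Bool.noConfusion hc1
  · exact Bool.noConfusion hc2
  · exact Bool.noConfusion hc2
  · exact Bool.noConfusion hc3
  · -- pure v-gadget chain of length 3: impossible
    exfalso
    obtain ⟨-, h1⟩ := h1
    obtain ⟨-, h2⟩ := h2
    obtain ⟨-, h3⟩ := h3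
    rcases h1 with ⟨-, rfl⟩ | ⟨-, rfl⟩ | ⟨-, rfl⟩ <;> simp_all

def scPsi {n m : ℕ} (p : List (SCVtx n m × SCVtx n m)) : Option (Fin m ⊕ (Fin n × Fin m)) :=
  match p.find? scIsCross with
  | some (Sum.inr (Sum.inr (i, _)), Sum.inl (j, _)) => some (Sum.inr (i, j))
  | some _ => none
  | none =>
    match p.getLast? with
    | some (_, Sum.inr (Sum.inl j)) => some (Sum.inl j)
    | _ => none

lemma sc_list3 {α : Type*} {p : List α} (h : p.length = 3) :
    ∃ e1 e2 e3, p = [e1, e2, e3] := by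
  match p, h with
  | [e1, e2, e3], _ => exact ⟨e1, e2, e3, rfl⟩

lemma sc_tok_spec {n m : ℕ} {S : Fin m → Finset (Fin n)} (hcard : ∀ j, (S j).card = 3)
    {p : List (SCVtx n m × SCVtx n m)} (hp : SCPath S p) (hlen : p.length = 3) :
    (∃ i j, p.find? scIsCross = some (Sum.inr (Sum.inr (i,(3:Fin 4))), Sum.inl (j,i)) ∧
      (Sum.inr (Sum.inr (i,(3:Fin 4))), Sum.inl (j,i)) ∈ p ∧ i ∈ S j ∧
      scPsi p = some (Sum.inr (i,j))) ∨
    (∃ j a b c, p = [(Sum.inl (j,a), Sum.inl (j,b)), (Sum.inl (j,b), Sum.inl (j,c)),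
        (Sum.inl (j,c), Sum.inr (Sum.inl j))] ∧
      a ∈ S j ∧ b ∈ S j ∧ c ∈ S j ∧ a < b ∧ b < c ∧
      (∀ x ∈ S j, x = a ∨ x = b ∨ x = c) ∧ scPsi p = some (Sum.inl j)) := by
  obtain ⟨e1, e2, e3, rfl⟩ := sc_list3 hlen
  obtain ⟨hall, hchain⟩ := hp
  obtain ⟨x1, y1⟩ := e1
  obtain ⟨x2, y2⟩ := e2
  obtain ⟨x3, y3⟩ := e3
  simp only [List.Chain', List.isChain_cons_cons, List.isChain_singleton, and_true] at hchain
  obtain ⟨hc1, hc2⟩ := hchain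
  subst hc1 hc2
  cases hfind : List.find? scIsCross [(x1, y1), (y1, y2), (y2, y3)] with
  | none =>
    have hfind' := hfind
    rw [List.find?_eq_none] at hfind
    have h1 := hall ((x1, y1)) (by simp)
    have h2 := hall ((y1, y2)) (by simp)
    have h3 := hall ((y2, y3)) (by simp)
    obtain ⟨j, a, b, c, rfl, rfl, rfl, rfl, ha, hb, hcc, hab, hbc, hcov⟩ :=
      sc_nocross_struct hcard h1 h2 h3
        (by simpa using hfind ((x1,y1)) (by simp)) (by simpa using hfind ((y1,y2)) (by simp))
        (by simpa using hfind ((y2,y3)) (by simp))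
    right
    refine ⟨j, a, b, c, rfl, ha, hb, hcc, hab, hbc, hcov, ?_⟩
    simp [scPsi, hfind']
  | some e =>
    have hmem := List.mem_of_find?_eq_some hfind
    have hcr : scIsCross e = true := List.find?_some hfind
    obtain ⟨u, v⟩ := e
    rcases u with ⟨j1,a⟩ | j1 | ⟨i1,t1⟩ <;> rcases v with ⟨j2,b⟩ | j2 | ⟨i2,t2⟩ <;>
      simp only [scIsCross] at hcr <;> try exact Bool.noConfusion hcr
    have hedge := hall _ hmem
    simp only [SCEdge] at hedge
    obtain ⟨rfl, rfl, hiS⟩ := hedge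
    left
    refine ⟨b, j2, rfl, hmem, hiS, ?_⟩
    simp only [scPsi, hfind]

lemma sc_cross_tail {n m : ℕ} {S : Fin m → Finset (Fin n)}
    {q : List (SCVtx n m × SCVtx n m)} (hq : SCPath S q) (hlen : q.length = 3)
    {i : Fin n} {j : Fin m}
    (he : (Sum.inr (Sum.inr (i,(3:Fin 4))), Sum.inl (j,i)) ∈ q) :
    (∃ y, SCEdge S (Sum.inl (j,i)) y ∧ (Sum.inl (j,i), y) ∈ q) ∨
    q = [(Sum.inr (Sum.inr (i,(0:Fin 4))), Sum.inr (Sum.inr (i,(2:Fin 4)))),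
         (Sum.inr (Sum.inr (i,(2:Fin 4))), Sum.inr (Sum.inr (i,(3:Fin 4)))),
         (Sum.inr (Sum.inr (i,(3:Fin 4))), Sum.inl (j,i))] := by
  obtain ⟨e1, e2, e3, rfl⟩ := sc_list3 hlen
  obtain ⟨hall, hchain⟩ := hq
  obtain ⟨x1, y1⟩ := e1
  obtain ⟨x2, y2⟩ := e2
  obtain ⟨x3, y3⟩ := e3
  simp only [List.Chain', List.isChain_cons_cons, List.isChain_singleton, and_true] at hchain
  obtain ⟨hc1, hc2⟩ := hchain
  subst hc1 hc2
  simp only [List.mem_cons, List.not_mem_nil, or_false, Prod.mk.injEq] at he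
  rcases he with ⟨rfl, rfl⟩ | ⟨rfl, rfl⟩ | ⟨rfl, rfl⟩
  · exact Or.inl ⟨y2, hall ((Sum.inl (j,i), y2)) (by simp), by simp⟩
  · exact Or.inl ⟨y3, hall ((Sum.inl (j,i), y3)) (by simp), by simp⟩
  · right
    have h2 := hall ((y1, Sum.inr (Sum.inr (i,(3:Fin 4))))) (by simp)
    have h1 := hall ((x1, y1)) (by simp)
    rcases y1 with ⟨j2,b⟩ | j2 | ⟨i2,t2⟩ <;> simp only [SCEdge] at h2
    obtain ⟨rfl, ht2⟩ := h2
    rcases ht2 with ⟨-, h⟩ | ⟨rfl, -⟩ | ⟨rfl, -⟩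
    · exact absurd h (by decide)
    · -- t2 = 2 : first edge must be v1 → v3
      rcases x1 with ⟨j1,a⟩ | j1 | ⟨i1,t1⟩ <;> simp only [SCEdge] at h1
      obtain ⟨rfl, ht1⟩ := h1
      rcases ht1 with ⟨rfl, -⟩ | ⟨-, h⟩ | ⟨-, h⟩
      · rfl
      · exact absurd h (by decide)
      · exact absurd h (by decide)
    · -- t2 = 1 : no edge enters v_{i,2}
      exfalso
      rcases x1 with ⟨j1,a⟩ | j1 | ⟨i1,t1⟩ <;> simp only [SCEdge] at h1
      rcases h1 with ⟨-, ⟨-, h⟩ | ⟨-, h⟩ | ⟨-, h⟩⟩ <;> exact absurd h (by decide)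

lemma sc_triple_unique {n : ℕ} {s : Finset (Fin n)} {a b c a' b' c' : Fin n}
    (ha : a ∈ s) (hb : b ∈ s) (hc : c ∈ s) (hab : a < b) (hbc : b < c)
    (hcov : ∀ x ∈ s, x = a ∨ x = b ∨ x = c)
    (ha' : a' ∈ s) (hb' : b' ∈ s) (hc' : c' ∈ s) (hab' : a' < b') (hbc' : b' < c')
    (hcov' : ∀ x ∈ s, x = a' ∨ x = b' ∨ x = c') :
    a = a' ∧ b = b' ∧ c = c' := by
  have hmin : ∀ x ∈ s, a ≤ x := by
    intro x hx
    rcases hcov x hx with rfl | rfl | rfl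
    · exact le_refl _
    · exact le_of_lt hab
    · exact le_of_lt (hab.trans hbc)
  have hmin' : ∀ x ∈ s, a' ≤ x := by
    intro x hx
    rcases hcov' x hx with rfl | rfl | rfl
    · exact le_refl _
    · exact le_of_lt hab'
    · exact le_of_lt (hab'.trans hbc')
  have hmax : ∀ x ∈ s, x ≤ c := by
    intro x hx
    rcases hcov x hx with rfl | rfl | rfl
    · exact le_of_lt (hab.trans hbc)
    · exact le_of_lt hbc
    · exact le_refl _
  have hmax' : ∀ x ∈ s, x ≤ c' := by
    intro x hx
    rcases hcov' x hx with rfl | rfl | rfl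
    · exact le_of_lt (hab'.trans hbc')
    · exact le_of_lt hbc'
    · exact le_refl _
  have haa : a = a' := le_antisymm (hmin a' ha') (hmin' a ha)
  have hccc : c = c' := le_antisymm (hmax' c hc) (hmax c' hc')
  refine ⟨haa, ?_, hccc⟩
  rcases hcov' b hb with h | h | h
  · exact absurd (haa ▸ h) (ne_of_gt hab)
  · exact h
  · exact absurd (hccc ▸ h) (ne_of_lt hbc)

/-- if the reduction graph contains at least 2n + m − τ pairwise
edge-disjoint directed 3-paths, then 𝒮 has a subfamily of size at most τ
covering U. -/
theorem stmt_12 {n m : ℕ} (S : Fin m → Finset (Fin n)) (τ : ℕ) (hτ : τ ≤ m)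
    (hcard : ∀ j, (S j).card = 3)
    (helem : ∀ i : Fin n, (Finset.univ.filter (fun j => i ∈ S j)).card = 2)
    (hpaths : ∃ P : Finset (List (SCVtx n m × SCVtx n m)),
      (∀ p ∈ P, SCPath S p ∧ p.length = 3) ∧ SCEdgeDisjoint P ∧
      2 * n + m - τ ≤ P.card) :
    ∃ T : Finset (Fin m), T.card ≤ τ ∧ ∀ i : Fin n, ∃ j ∈ T, i ∈ S j := by
  classical
  obtain ⟨P, hP, hdisj, hcount⟩ := hpaths
  -- ψ is injective on P
  have hinj : Set.InjOn scPsi (P : Set (List (SCVtx n m × SCVtx n m))) := by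
    intro p hp q hq hpq
    by_contra hne
    rcases sc_tok_spec hcard (hP p hp).1 (hP p hp).2 with
        ⟨i, j, hf, hm, hij, hψ⟩ | ⟨j, a, b, c, hform, ha, hb, hc, hab, hbc, hcov, hψ⟩ <;>
      rcases sc_tok_spec hcard (hP q hq).1 (hP q hq).2 with
        ⟨i', j', hf', hm', hij', hψ'⟩ | ⟨j', a', b', c', hform', ha', hb', hc', hab', hbc', hcov', hψ'⟩
    · rw [hψ, hψ'] at hpq
      obtain ⟨rfl, rfl⟩ : i = i' ∧ j = j' := by
        simpa [Prod.ext_iff] using hpq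
      exact hdisj p hp q hq hne _ hm hm'
    · rw [hψ, hψ'] at hpq; simp at hpq
    · rw [hψ, hψ'] at hpq; simp at hpq
    · rw [hψ, hψ'] at hpq
      obtain rfl : j = j' := by simpa using hpq
      obtain ⟨rfl, rfl, rfl⟩ :=
        sc_triple_unique ha hb hc hab hbc hcov ha' hb' hc' hab' hbc' hcov'
      rw [hform, hform'] at hne
      exact hne rfl
  set Ψ : Finset (Option (Fin m ⊕ (Fin n × Fin m))) := P.image scPsi with hΨdef
  set Full : Finset (Fin m) := Finset.univ.filter (fun j => some (Sum.inl j) ∈ Ψ) with hFulldef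
  set W : Fin n → Finset (Fin m) :=
    fun i => Finset.univ.filter (fun j => some (Sum.inr (i, j)) ∈ Ψ) with hWdef
  set Bad : Finset (Fin n) := Finset.univ.filter (fun i => ∀ j, i ∈ S j → j ∈ Full) with hBaddef
  -- facts about cross tokens
  have hΨr : ∀ i jj, some (Sum.inr (i, jj)) ∈ Ψ →
      i ∈ S jj ∧ ∃ q ∈ P, scPsi q = some (Sum.inr (i, jj)) ∧
        (Sum.inr (Sum.inr (i, (3:Fin 4))), Sum.inl (jj, i)) ∈ q := by
    intro i jj hmem
    obtain ⟨q, hq, hψq⟩ := Finset.mem_image.1 hmem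
    rcases sc_tok_spec hcard (hP q hq).1 (hP q hq).2 with
        ⟨i', j', hf', hm', hij', hψ'⟩ | ⟨j', a', b', c', hform', -, -, -, -, -, -, hψ'⟩
    · rw [hψ'] at hψq
      obtain ⟨rfl, rfl⟩ : i' = i ∧ j' = jj := by simpa [Prod.ext_iff] using hψq
      exact ⟨hij', q, hq, hψ', hm'⟩
    · rw [hψ'] at hψq; simp at hψq
  -- full gadget paths
  have hFullpath : ∀ jj ∈ Full, ∃ p ∈ P, ∃ a b c,
      p = [(Sum.inl (jj,a), Sum.inl (jj,b)), (Sum.inl (jj,b), Sum.inl (jj,c)),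
        (Sum.inl (jj,c), Sum.inr (Sum.inl jj))] ∧
      a ∈ S jj ∧ b ∈ S jj ∧ c ∈ S jj ∧ a < b ∧ b < c ∧
      (∀ x ∈ S jj, x = a ∨ x = b ∨ x = c) ∧ scPsi p = some (Sum.inl jj) := by
    intro jj hjj
    rw [hFulldef, Finset.mem_filter] at hjj
    obtain ⟨p, hp, hψp⟩ := Finset.mem_image.1 hjj.2
    rcases sc_tok_spec hcard (hP p hp).1 (hP p hp).2 with
        ⟨i', j', hf', hm', hij', hψ'⟩ | ⟨j', a', b', c', hform', ha', hb', hc', hab', hbc', hcov', hψ'⟩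
    · rw [hψ'] at hψp; simp at hψp
    · rw [hψ'] at hψp
      obtain rfl : j' = jj := by simpa using hψp
      exact ⟨p, hp, a', b', c', hform', ha', hb', hc', hab', hbc', hcov', hψ'⟩
  -- a cross path for element i into a "full" set leads to the canonical v-path
  have hcrossform : ∀ i jj, jj ∈ Full → ∀ q ∈ P, scPsi q = some (Sum.inr (i, jj)) →
      (Sum.inr (Sum.inr (i, (3:Fin 4))), Sum.inl (jj, i)) ∈ q → i ∈ S jj →
      q = [(Sum.inr (Sum.inr (i,(0:Fin 4))), Sum.inr (Sum.inr (i,(2:Fin 4)))),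
           (Sum.inr (Sum.inr (i,(2:Fin 4))), Sum.inr (Sum.inr (i,(3:Fin 4)))),
           (Sum.inr (Sum.inr (i,(3:Fin 4))), Sum.inl (jj,i))] := by
    intro i jj hjj q hq hψq he hiS
    obtain ⟨p1, hp1, a, b, c, hform, ha, hb, hc, hab, hbc, hcov, hψp1⟩ := hFullpath jj hjj
    have hqp1 : q ≠ p1 := by
      intro h
      rw [h, hψp1] at hψq
      simp at hψq
    rcases sc_cross_tail (hP q hq).1 (hP q hq).2 he with ⟨y, hy, hymem⟩ | hqform
    · exfalso
      have hpath1 := (hP p1 hp1).1.1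
      have hedge : (Sum.inl (jj, i), y) ∈ p1 := by
        rcases hcov i hiS with rfl | rfl | rfl
        · have h1 : SCEdge S (Sum.inl (jj, i)) (Sum.inl (jj, b)) :=
            hpath1 ((Sum.inl (jj,i), Sum.inl (jj,b))) (by rw [hform]; simp)
          rw [sc_out_unique hy h1, hform]; simp
        · have h1 : SCEdge S (Sum.inl (jj, i)) (Sum.inl (jj, c)) :=
            hpath1 ((Sum.inl (jj,i), Sum.inl (jj,c))) (by rw [hform]; simp)
          rw [sc_out_unique hy h1, hform]; simp
        · have h1 : SCEdge S (Sum.inl (jj, i)) (Sum.inr (Sum.inl jj)) :=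
            hpath1 ((Sum.inl (jj,i), Sum.inr (Sum.inl jj))) (by rw [hform]; simp)
          rw [sc_out_unique hy h1, hform]; simp
      exact hdisj q hq p1 hp1 hqp1 _ hymem hedge
    · exact hqform
  -- W i has at most one element when i is bad
  have hWBad : ∀ i ∈ Bad, (W i).card ≤ 1 := by
    intro i hi
    rw [hBaddef, Finset.mem_filter] at hi
    rw [Finset.card_le_one]
    intro j1 hj1 j2 hj2
    by_contra hj12
    rw [hWdef, Finset.mem_filter] at hj1 hj2
    obtain ⟨hiS1, q1, hq1, hψq1, he1⟩ := hΨr i j1 hj1.2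
    obtain ⟨hiS2, q2, hq2, hψq2, he2⟩ := hΨr i j2 hj2.2
    have hq12 : q1 ≠ q2 := by
      intro h
      rw [h, hψq2] at hψq1
      simp [Prod.ext_iff] at hψq1
      exact hj12 hψq1.symm
    have hf1 := hcrossform i j1 (hi.2 j1 hiS1) q1 hq1 hψq1 he1 hiS1
    have hf2 := hcrossform i j2 (hi.2 j2 hiS2) q2 hq2 hψq2 he2 hiS2
    exact hdisj q1 hq1 q2 hq2 hq12
      ((Sum.inr (Sum.inr (i,(0:Fin 4))), Sum.inr (Sum.inr (i,(2:Fin 4)))))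
      (by rw [hf1]; simp) (by rw [hf2]; simp)
  -- W i always has at most two elements
  have hW2 : ∀ i, (W i).card ≤ 2 := by
    intro i
    have hsub : W i ⊆ Finset.univ.filter (fun j => i ∈ S j) := by
      intro j hj
      rw [hWdef, Finset.mem_filter] at hj
      exact Finset.mem_filter.2 ⟨Finset.mem_univ _, (hΨr i j hj.2).1⟩
    exact (Finset.card_le_card hsub).trans (le_of_eq (helem i))
  -- counting
  have hcardΨ : P.card = Ψ.card := (Finset.card_image_of_injOn hinj).symm
  have hsub : Ψ ⊆ (Full.image (fun j => some (Sum.inl j))) ∪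
      Finset.univ.biUnion (fun i => (W i).image (fun j => some (Sum.inr (i, j)))) := by
    intro x hx
    obtain ⟨p, hp, rfl⟩ := Finset.mem_image.1 hx
    rcases sc_tok_spec hcard (hP p hp).1 (hP p hp).2 with
        ⟨i', j', -, -, -, hψ'⟩ | ⟨j', a', b', c', -, -, -, -, -, -, -, hψ'⟩
    · refine Finset.mem_union_right _ (Finset.mem_biUnion.2 ⟨i', Finset.mem_univ _, ?_⟩)
      refine Finset.mem_image.2 ⟨j', ?_, hψ'.symm ▸ rfl⟩
      rw [hWdef, Finset.mem_filter]
      exact ⟨Finset.mem_univ _, hψ' ▸ Finset.mem_image_of_mem scPsi hp⟩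
    · refine Finset.mem_union_left _ (Finset.mem_image.2 ⟨j', ?_, hψ'.symm ▸ rfl⟩)
      rw [hFulldef, Finset.mem_filter]
      exact ⟨Finset.mem_univ _, hψ' ▸ Finset.mem_image_of_mem scPsi hp⟩
  have hΨbound : Ψ.card ≤ Full.card + ∑ i, (W i).card := by
    calc Ψ.card ≤ _ := Finset.card_le_card hsub
    _ ≤ (Full.image (fun j => some (Sum.inl j))).card +
        (Finset.univ.biUnion (fun i => (W i).image (fun j => some (Sum.inr (i, j))))).card :=
      Finset.card_union_le _ _
    _ ≤ Full.card + ∑ i, (W i).card := by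
      gcongr
      · exact Finset.card_image_le
      · exact (Finset.card_biUnion_le).trans (Finset.sum_le_sum fun i _ => Finset.card_image_le)
  have hWsum : (∑ i, (W i).card) + Bad.card ≤ 2 * n := by
    have h1 : (∑ i, (W i).card) + (∑ i, if i ∈ Bad then 1 else 0) ≤ 2 * n := by
      rw [← Finset.sum_add_distrib]
      calc (∑ i : Fin n, ((W i).card + if i ∈ Bad then 1 else 0)) ≤ ∑ _i : Fin n, 2 := by
            refine Finset.sum_le_sum fun i _ => ?_
            by_cases hi : i ∈ Bad
            · simpa [hi] using hWBad i hi
            · simpa [hi] using hW2 i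
        _ = 2 * n := by simp [mul_comm]
    have h2 : (∑ i : Fin n, if i ∈ Bad then 1 else 0) = Bad.card := by
      simp [Finset.sum_ite_mem]
    omega
  have hFm : Full.card ≤ m := by
    have := Finset.card_le_card (Finset.subset_univ Full)
    simpa using this
  have hBn : Bad.card ≤ n := by
    have := Finset.card_le_card (Finset.subset_univ Bad)
    simpa using this
  -- build the cover
  have hg : ∀ i : Fin n, ∃ j, i ∈ S j := by
    intro i
    have h2 := helem i
    have : (Finset.univ.filter (fun j => i ∈ S j)).Nonempty := by
      rw [← Finset.card_pos, h2]; omega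
    obtain ⟨j, hj⟩ := this
    exact ⟨j, (Finset.mem_filter.1 hj).2⟩
  choose g hgS using hg
  refine ⟨Fullᶜ ∪ Bad.image g, ?_, ?_⟩
  · have hT : (Fullᶜ ∪ Bad.image g).card ≤ (m - Full.card) + Bad.card := by
      calc (Fullᶜ ∪ Bad.image g).card ≤ Fullᶜ.card + (Bad.image g).card :=
          Finset.card_union_le _ _
      _ ≤ (m - Full.card) + Bad.card := by
          gcongr
          · rw [Finset.card_compl]; simp
          · exact Finset.card_image_le
    omega
  · intro i
    by_cases hbad : i ∈ Bad
    · exact ⟨g i, Finset.mem_union_right _ (Finset.mem_image_of_mem g hbad), hgS i⟩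
    · rw [hBaddef, Finset.mem_filter] at hbad
      push_neg at hbad
      obtain ⟨j, hij, hjF⟩ := hbad (Finset.mem_univ i)
      exact ⟨j, Finset.mem_union_left _ (Finset.mem_compl.2 hjF), hij⟩
end

section
/- In the graph G of the (3,2)-set-cover reduction, any collection of pairwise edge-disjoint directed 3-paths has size at most 2n + m, since every directed 3-path in G starts at a vertex of the form v_{i,1}, v_{i,2}, or u_{j,x_p} (first vertex of a set-gadget path), and the edges leaving these starting points limit the count. -/
/-- If a 3-element set contains `a < b < c`, then `c` is its maximum. -/
lemma sc_max3 {n : ℕ} {s : Finset (Fin n)} (hs : s.card = 3) {a b c : Fin n}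
    (ha : a ∈ s) (hb : b ∈ s) (hc : c ∈ s) (hab : a < b) (hbc : b < c) :
    ∀ d ∈ s, d ≤ c := by
  have hac : a < c := hab.trans hbc
  have hsub : ({a, b, c} : Finset (Fin n)) ⊆ s := by
    intro x hx
    simp only [Finset.mem_insert, Finset.mem_singleton] at hx
    rcases hx with rfl | rfl | rfl <;> assumption
  have hcard3 : ({a, b, c} : Finset (Fin n)).card = 3 := by
    rw [Finset.card_insert_of_notMem (by simp [hab.ne, hac.ne]),
      Finset.card_insert_of_notMem (by simp [hbc.ne]), Finset.card_singleton]
  have heq : ({a, b, c} : Finset (Fin n)) = s :=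
    Finset.eq_of_subset_of_card_le hsub (by rw [hs, hcard3])
  intro d hd
  rw [← heq] at hd
  simp only [Finset.mem_insert, Finset.mem_singleton] at hd
  rcases hd with rfl | rfl | rfl
  · exact hac.le
  · exact hbc.le
  · exact le_refl _

/-- The path contains the edge v_{i,3} → v_{i,4} for some i. -/
def scCond1 {n m : ℕ} (p : List (SCVtx n m × SCVtx n m)) : Prop :=
  ∃ i : Fin n, ((Sum.inr (Sum.inr (i, 2)), Sum.inr (Sum.inr (i, 3))) :
      SCVtx n m × SCVtx n m) ∈ p

/-- The path contains the edge v_{i,2} → v_{i,4} for some i. -/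
def scCond2 {n m : ℕ} (p : List (SCVtx n m × SCVtx n m)) : Prop :=
  ∃ i : Fin n, ((Sum.inr (Sum.inr (i, 1)), Sum.inr (Sum.inr (i, 3))) :
      SCVtx n m × SCVtx n m) ∈ p

/-- The path contains the edge of the gadget of S_j going into the maximum. -/
def scCond3 {n m : ℕ} (S : Fin m → Finset (Fin n))
    (p : List (SCVtx n m × SCVtx n m)) : Prop :=
  ∃ j : Fin m, ∃ a b : Fin n, ((Sum.inl (j, a), Sum.inl (j, b)) :
      SCVtx n m × SCVtx n m) ∈ p ∧ ∀ c ∈ S j, c ≤ b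

/-- Every directed 3-path contains a "special" edge: `v_{i,3} → v_{i,4}`,
`v_{i,2} → v_{i,4}`, or the edge of a set gadget going into the maximum. -/
lemma sc_key {n m : ℕ} (S : Fin m → Finset (Fin n)) (hcard : ∀ j, (S j).card = 3)
    (p : List (SCVtx n m × SCVtx n m)) (hp : SCPath S p) (hlen : p.length = 3) :
    scCond1 p ∨ scCond2 p ∨ scCond3 S p := by
  obtain ⟨hall, hchain⟩ := hp
  rcases List.length_eq_three.mp hlen with ⟨e1, e2, e3, rfl⟩
  obtain ⟨x0, x1⟩ := e1; obtain ⟨y1, x2⟩ := e2; obtain ⟨y2, x3⟩ := e3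
  have h1 : SCEdge S x0 x1 := hall (x0, x1) (by simp)
  have h2 : SCEdge S y1 x2 := hall (y1, x2) (by simp)
  have h3 : SCEdge S y2 x3 := hall (y2, x3) (by simp)
  simp only [List.Chain', List.isChain_cons_cons, List.isChain_singleton, and_true] at hchain
  obtain ⟨hc1, hc2⟩ := hchain
  have hc1' : x1 = y1 := hc1
  have hc2' : x2 = y2 := hc2
  subst hc1'; subst hc2'
  rcases x1 with ⟨j, b⟩ | j | ⟨i, t⟩
  · -- x1 = u_{j, b}
    rcases x2 with ⟨j', c⟩ | j' | ⟨i', t'⟩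
    · simp only [SCEdge] at h2
      obtain ⟨rfl, hb, hc, hbc, -⟩ := h2
      rcases x3 with ⟨j'', d⟩ | j'' | ⟨i'', t''⟩
      · simp only [SCEdge] at h3
        obtain ⟨rfl, -, hd, hcd, -⟩ := h3
        exact Or.inr (Or.inr ⟨j, c, d, by simp, sc_max3 (hcard j) hb hc hd hbc hcd⟩)
      · simp only [SCEdge] at h3
        exact Or.inr (Or.inr ⟨j, b, c, by simp, h3.2.2⟩)
      · simp only [SCEdge] at h3
    · rcases x3 with ⟨j'', d⟩ | j'' | ⟨i'', t''⟩ <;> simp only [SCEdge] at h3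
    · simp only [SCEdge] at h2
  · -- x1 = sink u_j : no out-edge
    rcases x2 with ⟨j', c⟩ | j' | ⟨i', t'⟩ <;> simp only [SCEdge] at h2
  · -- x1 = v_{i, t}
    rcases x2 with ⟨j', c⟩ | j' | ⟨i', t'⟩
    · -- e2 : v_{i,4} → u_{j',i}
      simp only [SCEdge] at h2
      obtain ⟨rfl, rfl, -⟩ := h2
      rcases x0 with ⟨j0, a0⟩ | j0 | ⟨i0, t0⟩
      · simp only [SCEdge] at h1
      · simp only [SCEdge] at h1
      · simp only [SCEdge] at h1
        obtain ⟨rfl, hd⟩ := h1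
        rcases hd with ⟨rfl, habs⟩ | ⟨rfl, -⟩ | ⟨rfl, -⟩
        · exact absurd habs (by decide)
        · exact Or.inl ⟨i0, by simp⟩
        · exact Or.inr (Or.inl ⟨i0, by simp⟩)
    · simp only [SCEdge] at h2
    · -- e2 : v-v edge
      simp only [SCEdge] at h2
      obtain ⟨rfl, hd⟩ := h2
      rcases hd with ⟨rfl, rfl⟩ | ⟨rfl, rfl⟩ | ⟨rfl, rfl⟩
      · -- e2 = v1 → v3 : then e1 is impossible
        rcases x0 with ⟨j0, a0⟩ | j0 | ⟨i0, t0⟩ <;> simp only [SCEdge] at h1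
        obtain ⟨-, hd0⟩ := h1
        rcases hd0 with ⟨-, habs⟩ | ⟨-, habs⟩ | ⟨-, habs⟩ <;> exact absurd habs (by decide)
      · exact Or.inl ⟨i, by simp⟩
      · exact Or.inr (Or.inl ⟨i, by simp⟩)

/-- Pick the label of a special edge of a path, with priority
v3→v4, then v2→v4, then the max edge of a set gadget. -/
noncomputable def scPick {n m : ℕ} (S : Fin m → Finset (Fin n))
    (hne : Nonempty (Fin n ⊕ Fin n ⊕ Fin m))
    (p : List (SCVtx n m × SCVtx n m)) : Fin n ⊕ Fin n ⊕ Fin m := by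
  classical
  exact if h : scCond1 p then Sum.inl h.choose
  else if h2 : scCond2 p then Sum.inr (Sum.inl h2.choose)
  else if h3 : scCond3 S p then Sum.inr (Sum.inr h3.choose)
  else Classical.choice hne

lemma scPick_spec {n m : ℕ} (S : Fin m → Finset (Fin n))
    (hne : Nonempty (Fin n ⊕ Fin n ⊕ Fin m))
    (p : List (SCVtx n m × SCVtx n m))
    (hor : scCond1 p ∨ scCond2 p ∨ scCond3 S p) :
    (∃ i : Fin n, scPick S hne p = Sum.inl i ∧
      ((Sum.inr (Sum.inr (i, 2)), Sum.inr (Sum.inr (i, 3))) :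
        SCVtx n m × SCVtx n m) ∈ p) ∨
    (∃ i : Fin n, scPick S hne p = Sum.inr (Sum.inl i) ∧
      ((Sum.inr (Sum.inr (i, 1)), Sum.inr (Sum.inr (i, 3))) :
        SCVtx n m × SCVtx n m) ∈ p) ∨
    (∃ j : Fin m, ∃ a b : Fin n, scPick S hne p = Sum.inr (Sum.inr j) ∧
      ((Sum.inl (j, a), Sum.inl (j, b)) : SCVtx n m × SCVtx n m) ∈ p ∧
      ∀ c ∈ S j, c ≤ b) := by
  unfold scPick
  split_ifs with h1 h2 h3
  · exact Or.inl ⟨h1.choose, rfl, h1.choose_spec⟩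
  · exact Or.inr (Or.inl ⟨h2.choose, rfl, h2.choose_spec⟩)
  · obtain ⟨a, b, hm, hmax⟩ := h3.choose_spec
    exact Or.inr (Or.inr ⟨h3.choose, a, b, rfl, hm, hmax⟩)
  · rcases hor with h | h | h
    · exact absurd h h1
    · exact absurd h h2
    · exact absurd h h3

/-- in the reduction graph, every collection of pairwise
edge-disjoint directed 3-paths has size at most 2n + m. -/
theorem stmt_14 {n m : ℕ} (S : Fin m → Finset (Fin n))
    (hcard : ∀ j, (S j).card = 3)
    (helem : ∀ i : Fin n, (Finset.univ.filter (fun j => i ∈ S j)).card = 2)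
    (P : Finset (List (SCVtx n m × SCVtx n m)))
    (hP : ∀ p ∈ P, SCPath S p ∧ p.length = 3)
    (hdisj : SCEdgeDisjoint P) :
    P.card ≤ 2 * n + m := by
  classical
  rcases P.eq_empty_or_nonempty with rfl | ⟨p0, hp0⟩
  · simp
  have hkey : ∀ p ∈ P, scCond1 p ∨ scCond2 p ∨ scCond3 S p :=
    fun p hp => sc_key S hcard p (hP p hp).1 (hP p hp).2
  have hne : Nonempty (Fin n ⊕ Fin n ⊕ Fin m) := by
    rcases hkey p0 hp0 with ⟨i, -⟩ | ⟨i, -⟩ | ⟨j, -⟩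
    · exact ⟨Sum.inl i⟩
    · exact ⟨Sum.inl i⟩
    · exact ⟨Sum.inr (Sum.inr j)⟩
  have hinj : Set.InjOn (scPick S hne) ↑P := by
    intro p hp q hq hfpq
    by_contra hpq
    have hp' : p ∈ P := hp
    have hq' : q ∈ P := hq
    rcases scPick_spec S hne p (hkey p hp') with
        ⟨i, he, hm⟩ | ⟨i, he, hm⟩ | ⟨j, a, b, he, hm, hmax⟩ <;>
      rcases scPick_spec S hne q (hkey q hq') with
        ⟨i', he', hm'⟩ | ⟨i', he', hm'⟩ | ⟨j', a', b', he', hm', hmax'⟩ <;>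
      rw [he, he'] at hfpq
    · obtain rfl : i = i' := by injection hfpq
      exact hdisj p hp' q hq' hpq _ hm hm'
    · simp at hfpq
    · simp at hfpq
    · simp at hfpq
    · obtain rfl : i = i' := by simpa using hfpq
      exact hdisj p hp' q hq' hpq _ hm hm'
    · simp at hfpq
    · simp at hfpq
    · simp at hfpq
    · obtain rfl : j = j' := by simpa using hfpq
      -- the special max edge of gadget j is unique
      have hep := (hP p hp').1.1 _ hm
      have heq := (hP q hq').1.1 _ hm'
      simp only [SCEdge] at hep heq
      obtain ⟨-, hap, hbp, habp, hbetp⟩ := hep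
      obtain ⟨-, haq, hbq, habq, hbetq⟩ := heq
      obtain rfl : b = b' := le_antisymm (hmax' b hbp) (hmax b' hbq)
      obtain rfl : a = a' := by
        by_contra hne'
        rcases lt_or_gt_of_ne hne' with h | h
        · exact hbetp a' haq ⟨h, habq⟩
        · exact hbetq a hap ⟨h, habp⟩
      exact hdisj p hp' q hq' hpq _ hm hm'
  calc P.card ≤ (Finset.univ : Finset (Fin n ⊕ Fin n ⊕ Fin m)).card :=
        Finset.card_le_card_of_injOn (scPick S hne) (fun p _ => Finset.mem_univ _) hinj
    _ = 2 * n + m := by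
        simp only [Finset.card_univ, Fintype.card_sum, Fintype.card_fin]
        ring
end

section
/- In the graph G*_f of the IP reduction, every directed path from s_i to t_i within a variable gadget has exactly 6 edges, and the maximum possible interestingness score of any directed path in G*_f is W = log₂(6!) + 29m·log₂(7), attained exactly by 6-edge paths whose last edge is a type-T edge of weight 29m. -/
/-- Vertices of the graph G*_f of the IP reduction, for a 3-SAT formula with
n variables and m clauses: sources s_i, terminals t_i, subdivision vertices
t_{i,j,1}, t_{i,j,2} (`sub i j 0/1`), the vertices v_{i,j}, y_{i,j}, ȳ_{i,j}
(`yb`), u_{i,j} of the variable gadgets, and the clause vertices z_{j,0..2}. -/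
inductive GVtx (n m : ℕ)
  | s (i : Fin n)
  | t (i : Fin n)
  | sub (i : Fin n) (j : Fin m) (p : Fin 2)
  | v (i : Fin n) (j : Fin m)
  | y (i : Fin n) (j : Fin m)
  | yb (i : Fin n) (j : Fin m)
  | u (i : Fin n) (j : Fin m)
  | z (j : Fin m) (p : Fin 3)

/-- The set of (indices of) clauses in which variable `i` occurs.
A clause is a finite set of literals (variable, sign). -/
def occ {n m : ℕ} (C : Fin m → Finset (Fin n × Bool)) (i : Fin n) :
    Finset (Fin m) :=
  Finset.univ.filter (fun j => (i, true) ∈ C j ∨ (i, false) ∈ C j)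

/-- Cyclic successor of the occurrence index `j` among the clauses containing
variable `i`: the smallest occurrence index larger than `j`, or, if none exists,
the smallest occurrence index overall (α_{ℓ_i + 1} = α_1). -/
def nxt {n m : ℕ} (C : Fin m → Finset (Fin n × Bool)) (i : Fin n) (j : Fin m) :
    Fin m :=
  WithTop.untopD (WithTop.untopD j (occ C i).min) ((occ C i).filter (fun j' => j < j')).min

/-- Edge weights of G*_f: `ew C a b = 0` when (a, b) is not an edge; every edge
has weight 1 except the type-T edges (u_{i,j}, t_i), which have weight 29m. -/
def ew {n m : ℕ} (C : Fin m → Finset (Fin n × Bool)) :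
    GVtx n m → GVtx n m → ℕ
  | .s i, .sub i' j p => if i = i' ∧ j ∈ occ C i ∧ p = 0 then 1 else 0
  | .sub i j p, .sub i' j' p' =>
      if i = i' ∧ j = j' ∧ j ∈ occ C i ∧ p = 0 ∧ p' = 1 then 1 else 0
  | .sub i j p, .v i' j' => if i = i' ∧ j = j' ∧ j ∈ occ C i ∧ p = 1 then 1 else 0
  | .v i j, .y i' j' => if i = i' ∧ j = j' ∧ j ∈ occ C i then 1 else 0
  | .v i j, .yb i' j' => if i = i' ∧ j = j' ∧ j ∈ occ C i then 1 else 0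
  | .y i j, .u i' j' => if i = i' ∧ j = j' ∧ j ∈ occ C i then 1 else 0
  | .yb i j, .u i' j' => if i = i' ∧ j ∈ occ C i ∧ j' = nxt C i j then 1 else 0
  | .u i j, .t i' => if i = i' ∧ j ∈ occ C i then 29 * m else 0
  | .z j p, .z j' p' =>
      if j = j' ∧ ((p = 0 ∧ p' = 1) ∨ (p = 1 ∧ p' = 2)) then 1 else 0
  | .z j p, .y i j' => if j = j' ∧ p = 2 ∧ (i, true) ∈ C j then 1 else 0
  | .z j p, .yb i j' => if j = j' ∧ p = 2 ∧ (i, false) ∈ C j then 1 else 0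
  | _, _ => 0

/-- A directed path in G*_f, given as its list of edges. -/
def GPath {n m : ℕ} (C : Fin m → Finset (Fin n × Bool))
    (p : List (GVtx n m × GVtx n m)) : Prop :=
  (∀ e ∈ p, 0 < ew C e.1 e.2) ∧ p.Chain' (fun e f => e.2 = f.1)

/-- The interestingness score of a path of G*_f. -/
noncomputable def gScore {n m : ℕ} (C : Fin m → Finset (Fin n × Bool))
    (p : List (GVtx n m × GVtx n m)) : ℝ :=
  ∑ i : Fin p.length, (ew C (p.get i).1 (p.get i).2 : ℝ) * Real.logb 2 (i.1 + 2)


section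
variable {n m : ℕ}

/-- Level of a vertex. -/
def lvl : GVtx n m → ℕ
  | .s _ => 0
  | .t _ => 6
  | .sub _ _ p => 1 + p.1
  | .v _ _ => 3
  | .y _ _ => 4
  | .yb _ _ => 4
  | .u _ _ => 5
  | .z _ p => 1 + p.1

lemma lvl_le (a : GVtx n m) : lvl a ≤ 6 := by
  cases a <;> simp [lvl] <;> omega

lemma edge_lvl {C : Fin m → Finset (Fin n × Bool)} {a b : GVtx n m}
    (h : 0 < ew C a b) : lvl b = lvl a + 1 := by
  cases a <;> cases b <;> simp only [ew] at h <;>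
    first
    | exact absurd h (lt_irrefl 0)
    | (split_ifs at h with hc
       · first
         | rfl
         | (obtain ⟨-, -, rfl⟩ := hc <;> rfl)
         | (obtain ⟨-, -, -, rfl, rfl⟩ := hc <;> rfl)
         | (obtain ⟨-, -, -, rfl⟩ := hc <;> rfl)
         | (obtain ⟨-, ⟨rfl, rfl⟩ | ⟨rfl, rfl⟩⟩ := hc <;> rfl)
       · exact absurd h (lt_irrefl 0))

lemma ew_t {C : Fin m → Finset (Fin n × Bool)} (i : Fin n) (b : GVtx n m) :
    ew C (GVtx.t i) b = 0 := by cases b <;> rfl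

lemma ew_cases {C : Fin m → Finset (Fin n × Bool)} {a b : GVtx n m}
    (h : 0 < ew C a b) :
    ew C a b = 1 ∨ (ew C a b = 29 * m ∧ ∃ i j, a = GVtx.u i j ∧ b = GVtx.t i) := by
  cases a <;> cases b <;> simp only [ew] at h ⊢ <;>
    first
    | exact absurd h (lt_irrefl 0)
    | (split_ifs at h ⊢ with hc
       · first
         | exact Or.inl rfl
         | (obtain ⟨rfl, -⟩ := hc; exact Or.inr ⟨rfl, _, _, rfl, rfl⟩)
       · exact absurd h (lt_irrefl 0))

end
section
variable {n m : ℕ} {C : Fin m → Finset (Fin n × Bool)}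

lemma lvl_getLast {p : List (GVtx n m × GVtx n m)} (hp : GPath C p) (h : p ≠ []) :
    lvl (p.getLast h).2 = lvl (p.head h).1 + p.length := by
  induction p with
  | nil => exact absurd rfl h
  | cons e q ih =>
    cases q with
    | nil => simpa using edge_lvl (hp.1 e (by simp))
    | cons f r =>
      have hch : e.2 = f.1 := (List.isChain_cons_cons.mp hp.2).1
      have hq : GPath C (f :: r) := ⟨fun x hx => hp.1 x (List.mem_cons_of_mem _ hx),
        (List.isChain_cons_cons.mp hp.2).2⟩
      have := ih hq (by simp)
      have he := edge_lvl (hp.1 e (by simp))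
      rw [hch] at he
      rw [List.getLast_cons (by simp : (f :: r) ≠ [])]
      simp only [List.head_cons, List.length_cons] at this ⊢
      omega

lemma len_le {p : List (GVtx n m × GVtx n m)} (hp : GPath C p) : p.length ≤ 6 := by
  rcases eq_or_ne p [] with rfl | h
  · simp
  · have h1 := lvl_getLast hp h
    have h2 := lvl_le (p.getLast h).2
    omega

lemma mid_weight {p : List (GVtx n m × GVtx n m)} (hp : GPath C p) (i : ℕ)
    (h : i + 1 < p.length) :
    ew C (p.get ⟨i, by omega⟩).1 (p.get ⟨i, by omega⟩).2 = 1 := by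
  have hpos : 0 < ew C (p.get ⟨i, by omega⟩).1 (p.get ⟨i, by omega⟩).2 :=
    hp.1 _ (p.get_mem _)
  rcases ew_cases hpos with h1 | ⟨-, i', j', -, hb⟩
  · exact h1
  · exfalso
    have hch : (p.get ⟨i, by omega⟩).2 = (p.get ⟨i + 1, h⟩).1 :=
      List.isChain_iff_getElem.mp hp.2 i (by omega)
    have hpos2 : 0 < ew C (p.get ⟨i + 1, h⟩).1 (p.get ⟨i + 1, h⟩).2 :=
      hp.1 _ (p.get_mem _)
    rw [← hch, hb, ew_t] at hpos2
    exact absurd hpos2 (lt_irrefl 0)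

end
section
variable {n m : ℕ} {C : Fin m → Finset (Fin n × Bool)}

/-- Weight of the i-th edge of a path, as a total function of ℕ. -/
def wt (C : Fin m → Finset (Fin n × Bool)) (p : List (GVtx n m × GVtx n m))
    (i : ℕ) : ℕ :=
  if h : i < p.length then ew C (p.get ⟨i, h⟩).1 (p.get ⟨i, h⟩).2 else 0

lemma gScore_eq (p : List (GVtx n m × GVtx n m)) :
    gScore C p = ∑ i ∈ Finset.range p.length,
      (wt C p i : ℝ) * Real.logb 2 (i + 2) := by
  rw [gScore, ← Fin.sum_univ_eq_sum_range
    (fun i => (wt C p i : ℝ) * Real.logb 2 (i + 2)) p.length]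
  refine Finset.sum_congr rfl fun i _ => ?_
  simp only [wt, i.2, dif_pos, Fin.eta]

lemma wt_mid {p : List (GVtx n m × GVtx n m)} (hp : GPath C p) {i : ℕ}
    (h : i + 1 < p.length) : wt C p i = 1 := by
  rw [wt, dif_pos (by omega : i < p.length)]
  exact mid_weight hp i h

lemma sum_logb_mono {a b : ℕ} (hab : a ≤ b) :
    ∑ i ∈ Finset.range a, Real.logb 2 (i + 2) ≤
      ∑ i ∈ Finset.range b, Real.logb 2 (i + 2) := by
  refine Finset.sum_le_sum_of_subset_of_nonneg (Finset.range_subset_range.mpr hab)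
    fun i _ _ => Real.logb_nonneg one_lt_two ?_
  have : (0:ℝ) ≤ i := Nat.cast_nonneg i
  linarith

lemma sum_logb_five :
    ∑ i ∈ Finset.range 5, Real.logb 2 (i + 2) = Real.logb 2 720 := by
  rw [show (720:ℝ) = 2*3*4*5*6 by norm_num]
  rw [Real.logb_mul (by norm_num) (by norm_num), Real.logb_mul (by norm_num) (by norm_num),
    Real.logb_mul (by norm_num) (by norm_num), Real.logb_mul (by norm_num) (by norm_num)]
  simp [Finset.sum_range_succ]
  norm_num

lemma sum_logb_six :
    ∑ i ∈ Finset.range 6, Real.logb 2 (i + 2) = Real.logb 2 720 + Real.logb 2 7 := by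
  rw [Finset.sum_range_succ, sum_logb_five]
  norm_num

end

/-- in G*_f (each clause having exactly three literals over three
distinct variables), every directed path from s_i to t_i has exactly 6 edges,
and the maximum possible score of any directed path is W = log₂(6!) + 29m·log₂7,
attained exactly by 6-edge paths whose last edge is a type-T edge (u_{i,j}, t_i)
of weight 29m. -/
theorem stmt_16 {n m : ℕ} (hm : 0 < m) (C : Fin m → Finset (Fin n × Bool))
    (hcard : ∀ j, (C j).card = 3)
    (hvars : ∀ j, ((C j).image Prod.fst).card = 3) :
    (∀ i : Fin n, ∀ p : List (GVtx n m × GVtx n m), GPath C p → p ≠ [] →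
        p.head?.map Prod.fst = some (GVtx.s i) →
        p.getLast?.map Prod.snd = some (GVtx.t i) →
        p.length = 6) ∧
    (∀ p : List (GVtx n m × GVtx n m), GPath C p →
        gScore C p ≤ Real.logb 2 720 + 29 * m * Real.logb 2 7 ∧
        (gScore C p = Real.logb 2 720 + 29 * m * Real.logb 2 7 ↔
          p.length = 6 ∧ ∃ i j, p.getLast? = some (GVtx.u i j, GVtx.t i))) := by
  have l7 : (0:ℝ) < Real.logb 2 7 := Real.logb_pos one_lt_two (by norm_num)
  have l720 : (0:ℝ) < Real.logb 2 720 := Real.logb_pos one_lt_two (by norm_num)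
  have hm1 : (2:ℝ) ≤ 29 * m := by
    have : (1:ℝ) ≤ (m:ℝ) := by exact_mod_cast hm
    linarith
  constructor
  · -- Part 1
    intro i p hp hne hh hl
    rw [List.head?_eq_head hne, Option.map_some] at hh
    rw [List.getLast?_eq_getLast_of_ne_nil hne, Option.map_some] at hl
    have hh' : (p.head hne).1 = GVtx.s i := by injection hh
    have hl' : (p.getLast hne).2 = GVtx.t i := by injection hl
    have h1 := lvl_getLast hp hne
    rw [hh', hl'] at h1
    simp only [lvl] at h1
    omega
  · -- Part 2
    intro p hp
    rcases eq_or_ne p [] with rfl | hne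
    · rw [gScore_eq]
      simp only [List.length_nil, Finset.range_zero, Finset.sum_empty]
      refine ⟨by nlinarith, ?_⟩
      constructor
      · intro h; nlinarith
      · rintro ⟨h, -⟩; simp at h
    · have hk1 : 0 < p.length := List.length_pos_iff.mpr hne
      have hk6 : p.length ≤ 6 := len_le hp
      have hlastget : p.getLast? = some (p.get ⟨p.length - 1, by omega⟩) := by
        rw [List.getLast?_eq_getLast_of_ne_nil hne, List.getLast_eq_getElem]
        simp [List.get_eq_getElem]
      have hpos : 0 < ew C (p.get ⟨p.length - 1, by omega⟩).1
          (p.get ⟨p.length - 1, by omega⟩).2 := hp.1 _ (p.get_mem _)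
      have hsc : gScore C p =
          (∑ i ∈ Finset.range (p.length - 1), Real.logb 2 (i + 2)) +
            (ew C (p.get ⟨p.length - 1, by omega⟩).1
              (p.get ⟨p.length - 1, by omega⟩).2 : ℝ) *
              Real.logb 2 ((p.length - 1 : ℕ) + 2) := by
        rw [gScore_eq]
        conv_lhs => rw [show p.length = p.length - 1 + 1 from
          (Nat.succ_pred_eq_of_pos hk1).symm]
        rw [Finset.sum_range_succ]
        congr 1
        · refine Finset.sum_congr rfl fun i hi => ?_
          rw [wt_mid hp (by have := Finset.mem_range.mp hi; omega), Nat.cast_one, one_mul]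
        · rw [wt, dif_pos (by omega : p.length - 1 < p.length)]
      rcases ew_cases hpos with hone | ⟨h29, i, j, hu, ht⟩
      · -- last edge has weight 1: strict inequality
        have hlt : gScore C p < Real.logb 2 720 + 29 * m * Real.logb 2 7 := by
          rw [hsc, hone]
          have h1 : (∑ i ∈ Finset.range (p.length - 1), Real.logb 2 (i + 2)) +
              (1:ℕ) * Real.logb 2 ((p.length - 1 : ℕ) + 2) =
              ∑ i ∈ Finset.range (p.length - 1 + 1), Real.logb 2 (i + 2) := by
            rw [Finset.sum_range_succ]; push_cast; ring
          rw [h1, show p.length - 1 + 1 = p.length from Nat.succ_pred_eq_of_pos hk1]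
          have h2 := sum_logb_mono hk6
          rw [sum_logb_six] at h2
          have h3 := mul_le_mul_of_nonneg_right hm1 l7.le
          linarith
        refine ⟨hlt.le, fun h => absurd h hlt.ne, ?_⟩
        rintro ⟨h6, i, j, hlast⟩
        rw [hlastget, Option.some.injEq] at hlast
        rw [hlast] at hone
        simp only [ew] at hone
        split_ifs at hone <;> omega
      · -- last edge is a T-edge of weight 29 m
        have hget : p.get ⟨p.length - 1, by omega⟩ = (GVtx.u i j, GVtx.t i) := by
          rw [← hu, ← ht]
        rcases eq_or_lt_of_le hk6 with h6 | h6
        · -- length 6 : equality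
          have heq : gScore C p = Real.logb 2 720 + 29 * m * Real.logb 2 7 := by
            rw [hsc, h29, show p.length - 1 = 5 by omega, sum_logb_five]
            push_cast
            norm_num
          refine ⟨heq.le, ?_⟩
          simp only [heq, true_iff]
          exact ⟨h6, i, j, by rw [hlastget, hget]⟩
        · -- length < 6 : strict inequality
          have hlt : gScore C p < Real.logb 2 720 + 29 * m * Real.logb 2 7 := by
            rw [hsc, h29]
            have h2 := sum_logb_mono (show p.length - 1 ≤ 5 by omega)
            rw [sum_logb_five] at h2
            have h3 : Real.logb 2 ((p.length - 1 : ℕ) + 2) < Real.logb 2 7 := by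
              refine Real.logb_lt_logb one_lt_two (by positivity) ?_
              have : ((p.length - 1 : ℕ) : ℝ) ≤ 4 := by exact_mod_cast (by omega : p.length - 1 ≤ 4)
              linarith
            have h4 : (0:ℝ) < 29 * m := by linarith
            push_cast
            nlinarith
          refine ⟨hlt.le, fun h => absurd h hlt.ne, ?_⟩
          rintro ⟨hh6, -⟩
          omega
end
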